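/- arXiv:1801.08900 — 6 statements merged into one kernel-verified Lean document; each statement's English description precedes it below -/
import Mathlib

section
/- If G is a topological group, then its fundamental groupoid π(G) is a group-groupoid: the multiplication on objects is the group multiplication of G, the multiplication on morphisms is given by pointwise multiplication of paths, [a]·[b] = [t ↦ a(t)b(t)], and with these operations all groupoid structure maps are group homomorphisms; in particular the interchange law ([a][b]) ∘ ([c][d]) = ([a]∘[c])([b]∘[d]) holds whenever the composites are defined. -/
attribute [local instance] Path.Homotopic.setoid

variable {G : Type*} [TopologicalSpace G] [Group G] [IsTopologicalGroup G]

/-- Pointwise multiplication of homotopy classes of paths in a topological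
group: `[a]·[b] = [t ↦ a(t)b(t)]`. -/
noncomputable def pmulQ {a b c d : G} (p : Path.Homotopic.Quotient a b)
    (q : Path.Homotopic.Quotient c d) : Path.Homotopic.Quotient (a * c) (b * d) :=
  (Path.Homotopic.prod p q).map ⟨fun z => z.1 * z.2, continuous_mul⟩

/-- The total morphism set of the fundamental groupoid `π(G)`. -/
abbrev PiMor (G : Type*) [TopologicalSpace G] :=
  Σ (x : G) (y : G), Path.Homotopic.Quotient x y

section Aux

variable {G : Type*} [TopologicalSpace G] [Group G] [IsTopologicalGroup G]

/-- Pointwise multiplication of paths. -/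
noncomputable def mulPath' {a b c d : G} (p : Path a b) (q : Path c d) :
    Path (a * c) (b * d) where
  toFun := fun t => p t * q t
  continuous_toFun := by continuity
  source' := by simp
  target' := by simp

lemma pmulQ_lift {a b c d : G} (p : Path a b) (q : Path c d) :
    pmulQ (⟦p⟧ : Path.Homotopic.Quotient a b) ⟦q⟧ = ⟦mulPath' p q⟧ := by
  unfold pmulQ
  rfl

lemma sigma_eq' {a b a' b' : G} (p : Path a b) (p' : Path a' b')
    (ha : a = a') (hb : b = b') (h : ∀ t, p t = p' t) :
    (⟨a, b, ⟦p⟧⟩ : PiMor G) = ⟨a', b', ⟦p'⟧⟩ := by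
  subst ha; subst hb
  obtain rfl : p = p' := by ext t; exact h t
  rfl

end Aux

/-- If `G` is a topological group, then its fundamental groupoid `π(G)` is a
group-groupoid: the multiplication on objects is that of `G`, the
multiplication on morphisms is pointwise multiplication of paths,
`[a]·[b] = [t ↦ a(t)b(t)]`, the source, target and identity-assigning maps
are group homomorphisms, and the interchange law
`([a][b]) ∘ ([c][d]) = ([a]∘[c])([b]∘[d])` holds whenever the composites are
defined. -/
theorem fundamentalGroupoid_of_topGroup_is_group_groupoid :
    ∃ inst : Group (PiMor G), letI : Group (PiMor G) := inst;
      -- the group product of morphisms is pointwise multiplication of paths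
      (∀ p q : PiMor G,
        p * q = ⟨p.1 * q.1, p.2.1 * q.2.1, pmulQ p.2.2 q.2.2⟩) ∧
      -- the unit is the constant path at the unit of G
      ((1 : PiMor G) = ⟨1, 1, ⟦Path.refl (1 : G)⟧⟩) ∧
      -- the source and target maps are group homomorphisms
      (∀ p q : PiMor G, (p * q).1 = p.1 * q.1) ∧
      (∀ p q : PiMor G, (p * q).2.1 = p.2.1 * q.2.1) ∧
      -- the identity-assigning map ε is a group homomorphism
      (∀ x y : G, (⟨x * y, x * y, ⟦Path.refl (x * y)⟧⟩ : PiMor G) =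
        (⟨x, x, ⟦Path.refl x⟧⟩ : PiMor G) * (⟨y, y, ⟦Path.refl y⟧⟩ : PiMor G)) ∧
      -- the interchange law
      (∀ (a b c a' b' c' : G) (p : Path.Homotopic.Quotient a b)
        (r : Path.Homotopic.Quotient b c) (q : Path.Homotopic.Quotient a' b')
        (s : Path.Homotopic.Quotient b' c'),
        pmulQ (p.trans r) (q.trans s) = (pmulQ p q).trans (pmulQ r s)) := by
  refine ⟨{
    mul := fun p q => ⟨p.1 * q.1, p.2.1 * q.2.1, pmulQ p.2.2 q.2.2⟩
    one := ⟨1, 1, ⟦Path.refl (1 : G)⟧⟩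
    inv := fun p => ⟨p.1⁻¹, p.2.1⁻¹, p.2.2.map ⟨Inv.inv, continuous_inv⟩⟩
    mul_assoc := ?_
    one_mul := ?_
    mul_one := ?_
    inv_mul_cancel := ?_ }, ?_⟩
  · rintro ⟨x, y, p⟩ ⟨x', y', q⟩ ⟨x'', y'', r⟩
    induction p using Quotient.inductionOn with | h p => ?_
    induction q using Quotient.inductionOn with | h q => ?_
    induction r using Quotient.inductionOn with | h r => ?_
    show (⟨_, _, pmulQ (pmulQ ⟦p⟧ ⟦q⟧) ⟦r⟧⟩ : PiMor G) =
      ⟨_, _, pmulQ ⟦p⟧ (pmulQ ⟦q⟧ ⟦r⟧)⟩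
    simp only [pmulQ_lift]
    exact sigma_eq' _ _ (mul_assoc ..) (mul_assoc ..) fun t => mul_assoc ..
  · rintro ⟨x, y, p⟩
    induction p using Quotient.inductionOn with | h p => ?_
    show (⟨_, _, pmulQ ⟦Path.refl (1 : G)⟧ ⟦p⟧⟩ : PiMor G) = ⟨x, y, ⟦p⟧⟩
    rw [pmulQ_lift]
    exact sigma_eq' _ _ (one_mul _) (one_mul _) fun t => one_mul _
  · rintro ⟨x, y, p⟩
    induction p using Quotient.inductionOn with | h p => ?_
    show (⟨_, _, pmulQ ⟦p⟧ ⟦Path.refl (1 : G)⟧⟩ : PiMor G) = ⟨x, y, ⟦p⟧⟩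
    rw [pmulQ_lift]
    exact sigma_eq' _ _ (mul_one _) (mul_one _) fun t => mul_one _
  · rintro ⟨x, y, p⟩
    induction p using Quotient.inductionOn with | h p => ?_
    show (⟨_, _, pmulQ (Path.Homotopic.Quotient.map
        (⟦p⟧ : Path.Homotopic.Quotient x y)
        ⟨Inv.inv, continuous_inv⟩) ⟦p⟧⟩ : PiMor G) = ⟨1, 1, ⟦Path.refl (1 : G)⟧⟩
    rw [show Path.Homotopic.Quotient.map (⟦p⟧ : Path.Homotopic.Quotient x y) ⟨Inv.inv, continuous_inv⟩ = ⟦p.map continuous_inv⟧ from rfl, pmulQ_lift]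
    exact sigma_eq' _ _ (inv_mul_cancel _) (inv_mul_cancel _) fun t => inv_mul_cancel _
  refine ⟨fun p q => rfl, rfl, fun p q => rfl, fun p q => rfl, ?_, ?_⟩
  · intro x y
    show _ = (⟨x * y, x * y, pmulQ ⟦Path.refl x⟧ ⟦Path.refl y⟧⟩ : PiMor G)
    rw [pmulQ_lift]
    exact sigma_eq' _ _ rfl rfl fun t => rfl
  · intro a b c a' b' c' p r q s
    induction p using Quotient.inductionOn with | h p => ?_
    induction r using Quotient.inductionOn with | h r => ?_
    induction q using Quotient.inductionOn with | h q => ?_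
    induction s using Quotient.inductionOn with | h s => ?_
    rw [show Path.Homotopic.Quotient.trans (⟦p⟧ : Path.Homotopic.Quotient a b) ⟦r⟧ = ⟦p.trans r⟧ from rfl,
      show Path.Homotopic.Quotient.trans (⟦q⟧ : Path.Homotopic.Quotient a' b') ⟦s⟧ = ⟦q.trans s⟧ from rfl,
      pmulQ_lift, pmulQ_lift, pmulQ_lift,
      show Path.Homotopic.Quotient.trans (⟦mulPath' p q⟧ : Path.Homotopic.Quotient _ _) ⟦mulPath' r s⟧ =
        ⟦(mulPath' p q).trans (mulPath' r s)⟧ from rfl]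
    congr 1
    ext t
    simp only [mulPath', Path.trans_apply, Path.coe_mk_mk]
    split_ifs <;> rfl
end

section
/- In a groupoid G with object space a topological space, the set Γ(G) of admissible local sections forms an inverse semigroup under the product (st)(x) = s(x) ∘ t(βs(x)), with the inverse of s given by s⁻¹: βs(D_s) → G, βs(x) ↦ (s(x))⁻¹. -/
/-- A (small, single-type) groupoid: morphisms `M`, objects `O`.  The
composition `comp g h` (read in diagrammatic order, `g` followed by `h`)
is a total function which is only meaningful when `tgt g = src h`. -/
structure Grpd' (O M : Type*) where
  src : M → O
  tgt : M → O
  e : O → M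
  comp : M → M → M
  inv : M → M
  src_e : ∀ x, src (e x) = x
  tgt_e : ∀ x, tgt (e x) = x
  src_comp : ∀ g h, tgt g = src h → src (comp g h) = src g
  tgt_comp : ∀ g h, tgt g = src h → tgt (comp g h) = tgt h
  comp_assoc : ∀ g h k, tgt g = src h → tgt h = src k →
    comp (comp g h) k = comp g (comp h k)
  id_comp : ∀ g, comp (e (src g)) g = g
  comp_id : ∀ g, comp g (e (tgt g)) = g
  src_inv : ∀ g, src (inv g) = tgt g
  tgt_inv : ∀ g, tgt (inv g) = src g
  comp_inv : ∀ g, comp g (inv g) = e (src g)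
  inv_comp : ∀ g, comp (inv g) g = e (tgt g)

/-- A group-groupoid: a groupoid whose objects and morphisms carry group
structures such that the group multiplication, inversion and unit maps are
morphisms of groupoids; equivalently, the source, target and identity maps
are group homomorphisms and the interchange law holds. -/
structure GrpGrpd (O M : Type*) [Group O] [Group M] extends Grpd' O M where
  src_mul : ∀ g h : M, src (g * h) = src g * src h
  tgt_mul : ∀ g h : M, tgt (g * h) = tgt g * tgt h
  e_mul : ∀ x y : O, e (x * y) = e x * e y
  interchange : ∀ g h k l : M, tgt g = src k → tgt h = src l →
    comp (g * h) (k * l) = comp g k * comp h l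

/-- An admissible local section of a groupoid `G` with topologized object
space: a partially defined function `σ` (encoded with values in `Option M`)
on an open subset `U` of the objects such that `α(σ(x)) = x` on `U`, the
image `βσ(U)` is open, and `βσ` maps `U` homeomorphically onto `βσ(U)`
(encoded as: `βσ` is an open embedding of the domain). -/
structure ALS {O M : Type*} (G : Grpd' O M) [TopologicalSpace O] where
  f : O → Option M
  src_eq : ∀ x g, f x = some g → G.src g = x
  isOpen_dom : IsOpen {x : O | (f x).isSome}
  isOpenEmbedding_tgt :
    Topology.IsOpenEmbedding (fun p : {x : O // (f x).isSome} => G.tgt ((f p.1).get p.2))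

/-- The product formula for admissible local sections:
`(st)(x) = s(x) ∘ t(βs(x))`, defined where both factors are defined. -/
def ALS.mulFun {O M : Type*} {G : Grpd' O M} [TopologicalSpace O]
    (s t : ALS G) : O → Option M :=
  fun x => (s.f x).bind fun g => (t.f (G.tgt g)).map fun h => G.comp g h

namespace ALS

variable {O M : Type*} {G : Grpd' O M} [TopologicalSpace O]

theorem ext' {s t : ALS G} (h : s.f = t.f) : s = t := by
  cases s; cases t; cases h; rfl

theorem tgt_inj (s : ALS G) {x₁ x₂ : O} {g₁ g₂ : M}
    (h₁ : s.f x₁ = some g₁) (h₂ : s.f x₂ = some g₂) (h : G.tgt g₁ = G.tgt g₂) :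
    x₁ = x₂ ∧ g₁ = g₂ := by
  have m₁ : (s.f x₁).isSome := by simp [h₁]
  have m₂ : (s.f x₂).isSome := by simp [h₂]
  have key := s.isOpenEmbedding_tgt.injective (a₁ := ⟨x₁, m₁⟩) (a₂ := ⟨x₂, m₂⟩) (by
    show G.tgt ((s.f x₁).get m₁) = G.tgt ((s.f x₂).get m₂)
    simp only [h₁, h₂, Option.get_some, h])
  have hx : x₁ = x₂ := congrArg Subtype.val key
  refine ⟨hx, ?_⟩
  rw [hx, h₂] at h₁
  exact (Option.some_inj.mp h₁).symm

theorem mulFun_eq_some {s t : ALS G} {x : O} {k : M} :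
    s.mulFun t x = some k ↔
      ∃ g h, s.f x = some g ∧ t.f (G.tgt g) = some h ∧ G.comp g h = k := by
  simp only [mulFun, Option.bind_eq_some_iff, Option.map_eq_some_iff]
  tauto

theorem mulFun_isSome {s t : ALS G} {x : O} :
    (s.mulFun t x).isSome ↔ ∃ g, s.f x = some g ∧ (t.f (G.tgt g)).isSome := by
  cases hs : s.f x <;> simp [mulFun, hs]

theorem mulFun_fst_isSome {s t : ALS G} {x : O} (h : (s.mulFun t x).isSome) :
    (s.f x).isSome := by
  obtain ⟨g, hg, _⟩ := mulFun_isSome.mp h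
  simp [hg]

theorem mulFun_snd_isSome {s t : ALS G} {x : O} (h : (s.mulFun t x).isSome) :
    (t.f (G.tgt ((s.f x).get (mulFun_fst_isSome h)))).isSome := by
  obtain ⟨g, hg, ht⟩ := mulFun_isSome.mp h
  simpa [hg] using ht

theorem mulFun_get {s t : ALS G} {x : O} (h : (s.mulFun t x).isSome) :
    (s.mulFun t x).get h =
      G.comp ((s.f x).get (mulFun_fst_isSome h))
        ((t.f (G.tgt ((s.f x).get (mulFun_fst_isSome h)))).get (mulFun_snd_isSome h)) := by
  obtain ⟨k, hk⟩ := Option.isSome_iff_exists.mp h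
  obtain ⟨g, h', hg, hh, hcomp⟩ := mulFun_eq_some.mp hk
  simp only [hk, Option.get_some, ← hcomp]
  congr 1 <;> simp [hg, hh]

theorem isOpen_mulDom (s t : ALS G) : IsOpen {x : O | (s.mulFun t x).isSome} := by
  have heq : {x : O | (s.mulFun t x).isSome} =
      Subtype.val '' ((fun p : {x : O // (s.f x).isSome} => G.tgt ((s.f p.1).get p.2)) ⁻¹'
        {y : O | (t.f y).isSome}) := by
    ext x
    simp only [Set.mem_image, Set.mem_preimage, Set.mem_setOf_eq, mulFun_isSome]
    constructor
    · rintro ⟨g, hg, ht⟩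
      exact ⟨⟨x, by simp [hg]⟩, by simpa [hg] using ht, rfl⟩
    · rintro ⟨⟨x', hx'⟩, hmem, rfl⟩
      obtain ⟨g, hg⟩ := Option.isSome_iff_exists.mp hx'
      exact ⟨g, hg, by simpa [hg] using hmem⟩
  rw [heq]
  exact s.isOpen_dom.isOpenEmbedding_subtypeVal.isOpenMap _
    (s.isOpenEmbedding_tgt.continuous.isOpen_preimage _ t.isOpen_dom)

theorem isOpenEmbedding_mulTgt (s t : ALS G) :
    Topology.IsOpenEmbedding
      (fun p : {x : O // (s.mulFun t x).isSome} => G.tgt ((s.mulFun t p.1).get p.2)) := by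
  set incl : {x : O // (s.mulFun t x).isSome} → {x : O // (s.f x).isSome} :=
    fun p => ⟨p.1, mulFun_fst_isSome p.2⟩ with hincl
  have hincl_emb : Topology.IsOpenEmbedding incl := by
    apply Topology.IsOpenEmbedding.of_comp incl s.isOpen_dom.isOpenEmbedding_subtypeVal
    exact (isOpen_mulDom s t).isOpenEmbedding_subtypeVal
  have hFincl := s.isOpenEmbedding_tgt.comp hincl_emb
  set ψ : {x : O // (s.mulFun t x).isSome} → {y : O // (t.f y).isSome} :=
    fun p => ⟨G.tgt ((s.f p.1).get (mulFun_fst_isSome p.2)), mulFun_snd_isSome p.2⟩ with hψ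
  have hψ_emb : Topology.IsOpenEmbedding ψ := by
    apply Topology.IsOpenEmbedding.of_comp ψ t.isOpen_dom.isOpenEmbedding_subtypeVal
    exact hFincl
  have hcomp := t.isOpenEmbedding_tgt.comp hψ_emb
  have hfun : (fun p : {x : O // (s.mulFun t x).isSome} => G.tgt ((s.mulFun t p.1).get p.2)) =
      (fun q : {y : O // (t.f y).isSome} => G.tgt ((t.f q.1).get q.2)) ∘ ψ := by
    funext p
    show G.tgt ((s.mulFun t p.1).get p.2) = G.tgt ((t.f _).get (mulFun_snd_isSome p.2))
    rw [mulFun_get p.2]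
    apply G.tgt_comp
    exact (t.src_eq _ _ (Option.some_get (mulFun_snd_isSome p.2)).symm).symm
  rw [hfun]
  exact hcomp

def mul (s t : ALS G) : ALS G where
  f := s.mulFun t
  src_eq := by
    intro x k hk
    obtain ⟨g, h, hg, hh, rfl⟩ := mulFun_eq_some.mp hk
    rw [G.src_comp g h (t.src_eq _ _ hh).symm, s.src_eq _ _ hg]
  isOpen_dom := isOpen_mulDom s t
  isOpenEmbedding_tgt := isOpenEmbedding_mulTgt s t

@[simp] theorem mul_f (s t : ALS G) : (mul s t).f = s.mulFun t := rfl

theorem mul_assoc' (s t u : ALS G) : mul (mul s t) u = mul s (mul t u) := by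
  apply ext'
  funext x
  show (mul s t).mulFun u x = s.mulFun (mul t u) x
  rcases hs : s.f x with _ | g
  · simp [mulFun, hs]
  · rcases ht : t.f (G.tgt g) with _ | h
    · simp [mulFun, hs, ht]
    · have hsrc_h : G.tgt g = G.src h := (t.src_eq _ _ ht).symm
      have htgt : G.tgt (G.comp g h) = G.tgt h := G.tgt_comp _ _ hsrc_h
      rcases hu : u.f (G.tgt h) with _ | k
      · simp [mulFun, hs, ht, htgt, hu]
      · have hsrc_k : G.tgt h = G.src k := (u.src_eq _ _ hu).symm
        simp [mulFun, hs, ht, htgt, hu, G.comp_assoc g h k hsrc_h hsrc_k]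

open scoped Classical in
noncomputable def invFun' (s : ALS G) : O → Option M := fun y =>
  if h : ∃ x g, s.f x = some g ∧ G.tgt g = y then
    some (G.inv h.choose_spec.choose) else none

theorem invFun'_spec {s : ALS G} {y : O} {h' : M} (hh : invFun' s y = some h') :
    ∃ x g, s.f x = some g ∧ G.tgt g = y ∧ h' = G.inv g := by
  unfold invFun' at hh
  split_ifs at hh with h
  obtain ⟨hg, hty⟩ := h.choose_spec.choose_spec
  exact ⟨h.choose, h.choose_spec.choose, hg, hty, (Option.some_inj.mp hh).symm⟩

theorem invFun'_eq (s : ALS G) {x : O} {g : M} (hg : s.f x = some g) :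
    invFun' s (G.tgt g) = some (G.inv g) := by
  have hex : ∃ x' g', s.f x' = some g' ∧ G.tgt g' = G.tgt g := ⟨x, g, hg, rfl⟩
  rw [invFun', dif_pos hex]
  have hspec := hex.choose_spec.choose_spec
  rw [(tgt_inj s hspec.1 hg hspec.2).2]

theorem invFun'_isSome {s : ALS G} {y : O} :
    (invFun' s y).isSome ↔ ∃ x g, s.f x = some g ∧ G.tgt g = y := by
  unfold invFun'
  split_ifs with h <;> simp [h]

theorem invDom_eq (s : ALS G) :
    {y : O | (invFun' s y).isSome} =
      Set.range (fun p : {x : O // (s.f x).isSome} => G.tgt ((s.f p.1).get p.2)) := by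
  ext y
  simp only [Set.mem_setOf_eq, invFun'_isSome, Set.mem_range]
  constructor
  · rintro ⟨x, g, hg, rfl⟩
    exact ⟨⟨x, by simp [hg]⟩, by simp [hg]⟩
  · rintro ⟨⟨x, hx⟩, rfl⟩
    exact ⟨x, (s.f x).get hx, (Option.some_get hx).symm, rfl⟩

noncomputable def inv (s : ALS G) : ALS G where
  f := invFun' s
  src_eq := by
    intro y h' hh
    obtain ⟨x, g, hg, hty, rfl⟩ := invFun'_spec hh
    rw [G.src_inv, hty]
  isOpen_dom := by
    rw [invDom_eq]
    exact s.isOpenEmbedding_tgt.isOpenMap.isOpen_range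
  isOpenEmbedding_tgt := by
    set F : {x : O // (s.f x).isSome} → O :=
      fun p => G.tgt ((s.f p.1).get p.2) with hF
    have emb := s.isOpenEmbedding_tgt
    set φ : {x : O // (s.f x).isSome} ≃ₜ {y : O | (invFun' s y).isSome} :=
      (Topology.IsEmbedding.toHomeomorph (f := F) emb.toIsEmbedding).trans
        (Homeomorph.setCongr (invDom_eq s).symm) with hφ
    have key : ∀ p : {x : O // (s.f x).isSome},
        (fun q : {y : O // (invFun' s y).isSome} => G.tgt ((invFun' s q.1).get q.2))
          (φ p) = p.1 := by
      intro p
      have hv : ((φ p : {y : O | (invFun' s y).isSome}) : O) = F p := rfl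
      have hg : s.f p.1 = some ((s.f p.1).get p.2) := (Option.some_get p.2).symm
      have hiv : invFun' s (F p) = some (G.inv ((s.f p.1).get p.2)) := invFun'_eq s hg
      show G.tgt ((invFun' s (F p)).get (by simp [hiv])) = p.1
      simp only [hiv, Option.get_some, G.tgt_inv]
      exact s.src_eq _ _ hg
    have hfun : (fun q : {y : O // (invFun' s y).isSome} => G.tgt ((invFun' s q.1).get q.2)) =
        Subtype.val ∘ φ.symm := by
      funext q
      have h1 := key (φ.symm q)
      rw [φ.apply_symm_apply] at h1
      exact h1
    rw [hfun]
    exact s.isOpen_dom.isOpenEmbedding_subtypeVal.comp φ.symm.isOpenEmbedding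

@[simp] theorem inv_f (s : ALS G) : (inv s).f = invFun' s := rfl

theorem mul_inv_mul (s : ALS G) : mul (mul s (inv s)) s = s := by
  apply ext'
  funext x
  show (mul s (inv s)).mulFun s x = s.f x
  rcases hs : s.f x with _ | g
  · simp [mulFun, mul_f, hs]
  · have h1 : invFun' s (G.tgt g) = some (G.inv g) := invFun'_eq s hs
    have hx : G.src g = x := s.src_eq _ _ hs
    have hid : G.comp (G.e x) g = g := by rw [← hx]; exact G.id_comp g
    simp [mulFun, mul_f, inv_f, hs, h1, G.comp_inv, hx, G.tgt_e, hid]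

theorem inv_mul_inv (s : ALS G) : mul (mul (inv s) s) (inv s) = inv s := by
  apply ext'
  funext y
  show (mul (inv s) s).mulFun (inv s) y = (inv s).f y
  rcases hy : (inv s).f y with _ | h'
  · simp only [inv_f] at hy
    simp [mulFun, mul_f, hy]
  · simp only [inv_f] at hy
    obtain ⟨x, g, hg, hty, rfl⟩ := invFun'_spec hy
    subst hty
    have hx : G.src g = x := s.src_eq _ _ hg
    have h2 : G.comp (G.e (G.tgt g)) (G.inv g) = G.inv g := by
      have h3 := G.id_comp (G.inv g)
      rwa [G.src_inv] at h3
    simp [mulFun, mul_f, inv_f, hy, G.tgt_inv, hx, hg, G.inv_comp, G.tgt_e, h2]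

theorem inv_unique (s t' : ALS G) (h1 : mul (mul s t') s = s)
    (h2 : mul (mul t' s) t' = t') : t' = inv s := by
  have hA : ∀ x g, s.f x = some g → t'.f (G.tgt g) = some (G.inv g) := by
    intro x g hg
    have hx1 := congrArg (fun u : ALS G => u.f x) h1
    simp only [mul_f] at hx1
    rcases ht' : t'.f (G.tgt g) with _ | h
    · exfalso
      simp [mulFun, mul_f, hg, ht'] at hx1
    · have hsrc_h : G.tgt g = G.src h := (t'.src_eq _ _ ht').symm
      have htgtk : G.tgt (G.comp g h) = G.tgt h := G.tgt_comp _ _ hsrc_h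
      rcases hs2 : s.f (G.tgt h) with _ | g₂
      · exfalso
        simp [mulFun, mul_f, hg, ht', htgtk, hs2] at hx1
      · simp only [mulFun, mul_f, hg, ht', htgtk, hs2, Option.bind_some, Option.bind_some,
          Option.map_some, Option.some.injEq] at hx1
        have hsrc_g2 : G.tgt h = G.src g₂ := (s.src_eq _ _ hs2).symm
        have htg2 : G.tgt g₂ = G.tgt g := by
          have h4 := G.tgt_comp (G.comp g h) g₂ (htgtk.trans hsrc_g2)
          rw [hx1] at h4
          exact h4.symm
        obtain ⟨hxx, heq⟩ := tgt_inj s hs2 hg htg2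
        rw [heq] at hx1
        have hsg : G.src g = x := s.src_eq _ _ hg
        have hEh : G.comp g h = G.e (G.src g) := by
          have e1 : G.comp (G.comp (G.comp g h) g) (G.inv g) = G.comp g (G.inv g) := by
            rw [hx1]
          rw [G.comp_assoc (G.comp g h) g (G.inv g) (by rw [htgtk, hxx, ← hsg])
            (G.src_inv g).symm, G.comp_inv] at e1
          have heq : G.e (G.src g) = G.e (G.tgt (G.comp g h)) := by rw [htgtk, hxx, hsg]
          rw [heq, G.comp_id] at e1
          exact e1.trans heq.symm
        have hfin : h = G.inv g := by
          have e2 : G.comp (G.inv g) (G.comp g h) = G.comp (G.inv g) (G.e (G.src g)) := by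
            rw [hEh]
          rw [← G.comp_assoc (G.inv g) g h (G.tgt_inv g) hsrc_h, G.inv_comp] at e2
          have l1 : G.comp (G.e (G.tgt g)) h = h := by rw [hsrc_h]; exact G.id_comp h
          have l2 : G.comp (G.inv g) (G.e (G.src g)) = G.inv g := by
            have h5 := G.comp_id (G.inv g)
            rwa [G.tgt_inv] at h5
          rw [l1, l2] at e2
          exact e2
        rw [hfin]
  apply ext'
  funext y
  rcases hy : t'.f y with _ | h'
  · rcases hinv : invFun' s y with _ | k
    · rw [inv_f, hinv]
    · exfalso
      obtain ⟨x, g, hg, hty, rfl⟩ := invFun'_spec hinv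
      have h6 := hA x g hg
      rw [hty, hy] at h6
      exact nomatch h6
  · have hy2 := congrArg (fun u : ALS G => u.f y) h2
    simp only [mul_f] at hy2
    rcases hs1 : s.f (G.tgt h') with _ | g₁
    · exfalso
      simp [mulFun, mul_f, hy, hs1] at hy2
    · have hAg := hA _ _ hs1
      have hteq : G.tgt h' = G.tgt (G.inv g₁) := by rw [G.tgt_inv, s.src_eq _ _ hs1]
      obtain ⟨hy_eq, hval⟩ := tgt_inj t' hy hAg hteq
      rw [inv_f, hy_eq, invFun'_eq s hs1, hval]

end ALS

/-- The set `Γ(G)` of admissible local sections of a groupoid `G` with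
topologized object space is an inverse semigroup under the product
`(st)(x) = s(x) ∘ t(βs(x))`, the (unique) generalized inverse of `s` being
`βs(x) ↦ (s(x))⁻¹`. -/
theorem admissible_local_sections_inverse_semigroup
    {O M : Type*} (G : Grpd' O M) [TopologicalSpace O] :
    ∃ m : ALS G → ALS G → ALS G,
      -- the product is given by (st)(x) = s(x) ∘ t(βs(x))
      (∀ s t : ALS G, (m s t).f = s.mulFun t) ∧
      -- the product is associative
      (∀ s t u : ALS G, m (m s t) u = m s (m t u)) ∧
      -- every element has a unique generalized inverse ...
      (∀ s : ALS G, ∃! t : ALS G, m (m s t) s = s ∧ m (m t s) t = t) ∧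
      -- ... given by βs(x) ↦ (s(x))⁻¹
      (∀ s : ALS G, ∃ t : ALS G, (m (m s t) s = s ∧ m (m t s) t = t) ∧
        ∀ x g, s.f x = some g → t.f (G.tgt g) = some (G.inv g)) := by
  refine ⟨ALS.mul, fun s t => rfl, ALS.mul_assoc', fun s => ?_, fun s => ?_⟩
  · exact ⟨ALS.inv s, ⟨ALS.mul_inv_mul s, ALS.inv_mul_inv s⟩,
      fun t' ht' => ALS.inv_unique s t' ht'.1 ht'.2⟩
  · exact ⟨ALS.inv s, ⟨ALS.mul_inv_mul s, ALS.inv_mul_inv s⟩,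
      fun x g hg => ALS.invFun'_eq s hg⟩
end

section
/- Let G and H be group-groupoids, W ⊆ G a wide subgroupoid that is also a subgroup of the morphism group and generates G as a groupoid, and f: W → H a local morphism of group-groupoids which is the identity on objects. If f̃: G → H is a groupoid morphism extending f, then f̃ also preserves the group product: f̃(ab) = f̃(a)f̃(b) for all morphisms a, b of G. -/
/-- `IsComposite G W g` says that the morphism `g` is a finite composite of
morphisms belonging to `W`; `W` generates `G` when every morphism satisfies
this. -/
inductive IsComposite {O M : Type*} (G : Grpd' O M) (W : Set M) : M → Prop
  | base {w : M} : w ∈ W → IsComposite G W w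
  | comp {g h : M} : IsComposite G W g → IsComposite G W h →
      G.tgt g = G.src h → IsComposite G W (G.comp g h)

/-- Let `G`, `H` be group-groupoids, `W ⊆ G` a wide subgroupoid which is
also a subgroup of the morphism group and which generates `G`, and
`f : W → H` a local morphism of group-groupoids which is the identity on
objects.  If `F : G → H` is a groupoid morphism extending `f`, then `F`
also preserves the group product. -/
theorem local_morphism_extension_preserves_mul
    {O M M' : Type*} [Group O] [Group M] [Group M']
    (G : GrpGrpd O M) (H : GrpGrpd O M') (W : Set M)
    -- W is a wide subgroupoid of G
    (hWide : ∀ x : O, G.e x ∈ W)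
    (hWcomp : ∀ u v, u ∈ W → v ∈ W → G.tgt u = G.src v → G.comp u v ∈ W)
    (hWginv : ∀ u ∈ W, G.inv u ∈ W)
    -- W is a subgroup of the morphism group of G
    (hW1 : (1 : M) ∈ W)
    (hWmul : ∀ u v, u ∈ W → v ∈ W → u * v ∈ W)
    (hWinv : ∀ u ∈ W, u⁻¹ ∈ W)
    -- W generates G as a groupoid
    (hgen : ∀ g : M, IsComposite G.toGrpd' W g)
    -- f is a local morphism of group-groupoids, the identity on objects
    (f : M → M')
    (hfsrc : ∀ u ∈ W, H.src (f u) = G.src u)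
    (hftgt : ∀ u ∈ W, H.tgt (f u) = G.tgt u)
    (hfe : ∀ x : O, f (G.e x) = H.e x)
    (hfcomp : ∀ u v, u ∈ W → v ∈ W → G.tgt u = G.src v →
      f (G.comp u v) = H.comp (f u) (f v))
    (hfmul : ∀ u v, u ∈ W → v ∈ W → f (u * v) = f u * f v)
    -- F is a groupoid morphism (identity on objects) extending f
    (F : M → M')
    (hFext : ∀ u ∈ W, F u = f u)
    (hFsrc : ∀ g : M, H.src (F g) = G.src g)
    (hFtgt : ∀ g : M, H.tgt (F g) = G.tgt g)
    (hFe : ∀ x : O, F (G.e x) = H.e x)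
    (hFcomp : ∀ g h : M, G.tgt g = G.src h →
      F (G.comp g h) = H.comp (F g) (F h)) :
    ∀ a b : M, F (a * b) = F a * F b := by
  -- Step 1: the claim when the left factor lies in W.
  have L : ∀ b, IsComposite G.toGrpd' W b → ∀ u ∈ W, F (u * b) = F u * F b := by
    intro b hb
    induction hb with
    | @base v hv =>
      intro u hu
      rw [hFext _ (hWmul u v hu hv), hFext _ hu, hFext _ hv, hfmul u v hu hv]
    | @comp g h hg hh hco ihg ihh =>
      intro u hu
      have key : u * G.comp g h = G.comp (u * g) (G.e (G.tgt u) * h) := by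
        rw [G.interchange u g (G.e (G.tgt u)) h (by rw [G.src_e]) hco, G.comp_id]
      have hside : G.tgt (u * g) = G.src (G.e (G.tgt u) * h) := by
        rw [G.tgt_mul, G.src_mul, G.src_e, hco]
      rw [key, hFcomp _ _ hside, ihg u hu, ihh (G.e (G.tgt u)) (hWide _),
        hFe (G.tgt u),
        H.interchange (F u) (F g) (H.e (G.tgt u)) (F h)
          (by rw [hFtgt, H.src_e]) (by rw [hFtgt, hFsrc, hco])]
      have : H.comp (F u) (H.e (G.tgt u)) = F u := by
        have := H.comp_id (F u); rwa [hFtgt] at this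
      rw [this, hFcomp g h hco]
  -- Step 2: full claim by induction on the left factor.
  have Main : ∀ a, IsComposite G.toGrpd' W a →
      ∀ b, IsComposite G.toGrpd' W b → F (a * b) = F a * F b := by
    intro a ha
    induction ha with
    | @base u hu => intro b hb; exact L b hb u hu
    | @comp g h hg hh hco ihg ihh =>
      intro b hb
      have key : G.comp g h * b = G.comp (g * b) (h * G.e (G.tgt b)) := by
        rw [G.interchange g b h (G.e (G.tgt b)) hco (by rw [G.src_e]), G.comp_id]
      have hside : G.tgt (g * b) = G.src (h * G.e (G.tgt b)) := by
        rw [G.tgt_mul, G.src_mul, G.src_e, hco]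
      rw [key, hFcomp _ _ hside, ihg b hb,
        ihh (G.e (G.tgt b)) (IsComposite.base (hWide _)),
        hFe (G.tgt b),
        H.interchange (F g) (F b) (F h) (H.e (G.tgt b))
          (by rw [hFtgt, hFsrc, hco]) (by rw [hFtgt, H.src_e])]
      have : H.comp (F b) (H.e (G.tgt b)) = F b := by
        have := H.comp_id (F b); rwa [hFtgt] at this
      rw [this, hFcomp g h hco]
  intro a b
  exact Main a (hgen a) b (hgen b)
end

section
/- Let G be a group-groupoid and a = u₁∘u₂∘…∘u_n, b = v₁∘v₂∘…∘v_m composable strings of morphisms with m ≥ n. Then the group product satisfies ab = (u₁v₁)∘…∘(u_nv_n)∘(1_{β(u_n)}v_{n+1})∘…∘(1_{β(u_n)}v_m), where 1_{β(u_n)} is the identity morphism at the object β(u_n). -/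
/-- The iterated groupoid composite `u₁ ∘ u₂ ∘ … ∘ uₙ` of a list of
morphisms (the empty composite is the group unit, a junk value). -/
def listComp {O M : Type*} [Group M] (G : Grpd' O M) : List M → M
  | [] => 1
  | a :: t => t.foldl G.comp a


section
variable {O M : Type*}

lemma chain_comp [Group M] (G : Grpd' O M) (a b : M) (t : List M)
    (hab : G.tgt a = G.src b)
    (h : List.Chain' (fun g h => G.tgt g = G.src h) (b :: t)) :
    List.Chain' (fun g h => G.tgt g = G.src h) (G.comp a b :: t) := by
  cases t with
  | nil => simp [List.Chain']
  | cons x t' =>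
    obtain ⟨hbx, h'⟩ := List.isChain_cons_cons.mp h
    exact List.isChain_cons_cons.mpr ⟨by rw [G.tgt_comp a b hab]; exact hbx, h'⟩

lemma eqlen [Group O] [Group M] (G : GrpGrpd O M) :
    ∀ (u v : List M), u.length = v.length →
    List.Chain' (fun g h => G.tgt g = G.src h) u →
    List.Chain' (fun g h => G.tgt g = G.src h) v →
    listComp G.toGrpd' u * listComp G.toGrpd' v
      = listComp G.toGrpd' (List.zipWith (· * ·) u v)
  | [], [], _, _, _ => by simp [listComp]
  | [a], [c], _, _, _ => rfl
  | a::b::t, c::d::s, hlen, hu, hv => by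
      obtain ⟨hab, hu'⟩ := List.isChain_cons_cons.mp hu
      obtain ⟨hcd, hv'⟩ := List.isChain_cons_cons.mp hv
      have h1 : listComp G.toGrpd' (a::b::t) = listComp G.toGrpd' (G.toGrpd'.comp a b :: t) := rfl
      have h2 : listComp G.toGrpd' (c::d::s) = listComp G.toGrpd' (G.toGrpd'.comp c d :: s) := rfl
      rw [h1, h2, eqlen G (G.toGrpd'.comp a b :: t) (G.toGrpd'.comp c d :: s)
        (by simpa using hlen) (chain_comp G.toGrpd' a b t hab hu')
        (chain_comp G.toGrpd' c d s hcd hv')]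
      show listComp G.toGrpd' (G.toGrpd'.comp a b * G.toGrpd'.comp c d :: List.zipWith (· * ·) t s)
        = listComp G.toGrpd' (G.toGrpd'.comp (a*c) (b*d) :: List.zipWith (· * ·) t s)
      rw [G.interchange a c b d hab hcd]
  termination_by u v => u.length

lemma listComp_append [Group M] (G : Grpd' O M) (a : M) (t l : List M) :
    listComp G (a :: t ++ l) = l.foldl G.comp (listComp G (a :: t)) := by
  simp [listComp, List.foldl_append]

lemma foldl_replicate_e [Group M] (G : Grpd' O M) (x : O) :
    ∀ (k : ℕ) (c : M), G.tgt c = x → (List.replicate k (G.e x)).foldl G.comp c = c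
  | 0, c, _ => rfl
  | k+1, c, h => by
      rw [List.replicate_succ, List.foldl_cons,
        show G.comp c (G.e x) = c by rw [← h, G.comp_id],
        foldl_replicate_e G x k c h]

lemma tgt_listComp [Group M] (G : Grpd' O M) :
    ∀ (t : List M) (a : M),
    List.Chain' (fun g h => G.tgt g = G.src h) (a::t) →
    G.tgt (listComp G (a::t)) = G.tgt ((a::t).getLast (by simp))
  | [], a, _ => rfl
  | b::t, a, h => by
      obtain ⟨hab, h'⟩ := List.isChain_cons_cons.mp h
      have h1 : listComp G (a::b::t) = listComp G (G.comp a b :: t) := rfl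
      rw [h1, tgt_listComp G t (G.comp a b) (chain_comp G a b t hab h')]
      cases t <;> simp [List.getLast, G.tgt_comp a b hab]

end

/-- In a group-groupoid, if `a = u₁∘…∘uₙ` and `b = v₁∘…∘v_m` are composable
strings of morphisms with `m ≥ n`, then
`ab = (u₁v₁)∘…∘(uₙvₙ)∘(1_{β(uₙ)}v_{n+1})∘…∘(1_{β(uₙ)}v_m)`, where
`1_{β(uₙ)}` is the identity morphism at the object `β(uₙ)`. -/
theorem group_groupoid_product_of_composites
    {O M : Type*} [Group O] [Group M] (G : GrpGrpd O M)
    (u v : List M) (hu : u ≠ []) (hv : v ≠ [])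
    (huc : List.Chain' (fun g h => G.tgt g = G.src h) u)
    (hvc : List.Chain' (fun g h => G.tgt g = G.src h) v)
    (hmn : u.length ≤ v.length) :
    listComp G.toGrpd' u * listComp G.toGrpd' v =
      listComp G.toGrpd'
        (List.zipWith (· * ·)
          (u ++ List.replicate (v.length - u.length)
            (G.e (G.tgt (u.getLast hu)))) v) := by
  obtain ⟨a, t, rfl⟩ := List.exists_cons_of_ne_nil hu
  set x := G.toGrpd'.tgt ((a::t).getLast hu) with hx
  set k := v.length - (a::t).length with hk
  have hlen : ((a::t) ++ List.replicate k (G.toGrpd'.e x)).length = v.length := by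
    simp only [List.length_append, List.length_replicate]
    omega
  have htgt : G.toGrpd'.tgt (listComp G.toGrpd' (a::t)) = x :=
    tgt_listComp G.toGrpd' t a huc
  have hval : listComp G.toGrpd' ((a::t) ++ List.replicate k (G.toGrpd'.e x))
      = listComp G.toGrpd' (a::t) := by
    rw [listComp_append, foldl_replicate_e G.toGrpd' x k _ htgt]
  have hchain : List.Chain' (fun g h => G.toGrpd'.tgt g = G.toGrpd'.src h)
      ((a::t) ++ List.replicate k (G.toGrpd'.e x)) := by
    rw [List.Chain', List.isChain_append]
    refine ⟨huc, ?_, ?_⟩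
    · apply List.isChain_replicate_of_rel
      rw [G.toGrpd'.tgt_e, G.toGrpd'.src_e]
    · intro g hg y hy
      rw [List.getLast?_eq_getLast hu] at hg
      have hy' : y = G.toGrpd'.e x :=
        List.eq_of_mem_replicate (List.mem_of_mem_head? hy)
      obtain rfl := Option.some_injective _ hg
      rw [hy', G.toGrpd'.src_e]
  rw [← hval, eqlen G _ v hlen hchain hvc]
end

section
/- Let G be a star topological groupoid and g a morphism of G from x to y. Then left translation L_g induces a group isomorphism and (after applying the fundamental groupoid functor) a groupoid isomorphism π(G_y) → π(G_x); in particular if a: [0,1] → G_x is a path in the star G_x and b: [0,1] → G_{β(a(1))} is a path starting at the identity ε(β(a(1))), then t ↦ a(1)∘b(t) is a path in G_x from a(1) to a(1)∘b(1), and the formula [a]•[b] = [a ⋆ (a(1)∘b)] gives a well-defined operation on homotopy classes rel endpoints. -/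
/-- The star of a groupoid `G` at the object `x`. -/
abbrev Grpd'.star {O M : Type*} (G : Grpd' O M) (x : O) := {m : M // G.src m = x}

/-- Left translation `L_g : G_{β(g)} → G_{α(g)}`, `h ↦ g ∘ h`. -/
def Grpd'.starTrans {O M : Type*} (G : Grpd' O M) (g : M)
    (h : G.star (G.tgt g)) : G.star (G.src g) :=
  ⟨G.comp g h.1, by rw [G.src_comp g h.1 h.2.symm]⟩

section Aux

universe u

open CategoryTheory

/-- Transport a star along an equality of objects. -/
def Grpd'.homeoOfEq {O M : Type*} (G : Grpd' O M)
    [∀ x : O, TopologicalSpace {m : M // G.src m = x}]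
    {y x : O} (e : y = x) : G.star y ≃ₜ G.star x := by
  subst e; exact Homeomorph.refl _

lemma Grpd'.homeoOfEq_fst {O M : Type*} (G : Grpd' O M)
    [∀ x : O, TopologicalSpace {m : M // G.src m = x}]
    {y x : O} (e : y = x) (z : G.star y) : (G.homeoOfEq e z).1 = z.1 := by
  subst e; rfl

/-- The fundamental group isomorphism induced by a homeomorphism. -/
noncomputable def equivOfHomeo {X Y : Type u} [TopologicalSpace X] [TopologicalSpace Y]
    (h : X ≃ₜ Y) : FundamentalGroupoid X ≌ FundamentalGroupoid Y :=
  FundamentalGroupoidFunctor.equivOfHomotopyEquiv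
    (X := TopCat.of X) (Y := TopCat.of Y) h.toHomotopyEquiv

/-- The fundamental group isomorphism induced by a homeomorphism. -/
noncomputable def mulEquivOfHomeo {X Y : Type u} [TopologicalSpace X] [TopologicalSpace Y]
    (h : X ≃ₜ Y) (x : X) : FundamentalGroup X x ≃* FundamentalGroup Y (h x) :=
  ((equivOfHomeo h).fullyFaithfulFunctor.mulEquivEnd ⟨x⟩).trans
    (Iso.conj (CategoryTheory.eqToIso
      (show (equivOfHomeo h).functor.obj ⟨x⟩ = ⟨h x⟩ from rfl)))

lemma homotopic_cast {X : Type*} [TopologicalSpace X] {x y x' y' : X}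
    {p p' : Path x y} (h : p.Homotopic p') (hx : x' = x) (hy : y' = y) :
    (p.cast hx hy).Homotopic (p'.cast hx hy) := by
  subst hx; subst hy; exact h

end Aux

/-- Let `G` be a star topological groupoid (each star is topologized and all
left translations are homeomorphisms).  Then each left translation `L_g`
induces a group isomorphism of fundamental groups and an equivalence
(isomorphism) of fundamental groupoids `π(G_{β(g)}) → π(G_{α(g)})`; moreover,
if `a` is a path in the star `G_x` and `b` is a path in `G_{β(a(1))}`
starting at the identity `ε(β(a(1)))`, then `t ↦ a(1) ∘ b(t)` is a path in
`G_x` from `a(1)` to `a(1) ∘ b(1)`, and the formula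
`[a] • [b] = [a ⋆ (a(1) ∘ b)]` is well defined on homotopy classes rel
endpoints. -/
theorem star_translation_induces_monodromy_composition
    {O M : Type*} (G : Grpd' O M)
    [∀ x : O, TopologicalSpace {m : M // G.src m = x}]
    (hL : ∀ g : M, IsHomeomorph (G.starTrans g))
    (x : O) (p q : G.star x) (a : Path p q)
    (i r : G.star (G.tgt q.1)) (hi : i.1 = G.e (G.tgt q.1))
    (b : Path i r) :
    -- L_g induces an isomorphism of fundamental groups
    (∀ (g : M) (h₀ : G.star (G.tgt g)),
      Nonempty (FundamentalGroup (G.star (G.tgt g)) h₀ ≃*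
        FundamentalGroup (G.star (G.src g)) (G.starTrans g h₀))) ∧
    -- and an isomorphism of fundamental groupoids π(G_{β g}) → π(G_{α g})
    (∀ g : M,
      Nonempty (CategoryTheory.Equivalence
        (FundamentalGroupoid (G.star (G.tgt g)))
        (FundamentalGroupoid (G.star (G.src g))))) ∧
    -- t ↦ a(1) ∘ b(t) is a path in G_x from a(1) to a(1) ∘ b(1)
    (∃ c : Path q (⟨G.comp q.1 r.1, by
        rw [G.src_comp q.1 r.1 r.2.symm]; exact q.2⟩ : G.star x),
      ∀ t, (c t).1 = G.comp q.1 (b t).1) ∧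
    -- the formula [a] • [b] = [a ⋆ (a(1) ∘ b)] is well defined
    (∀ (a' : Path p q) (b' : Path i r), a.Homotopic a' → b.Homotopic b' →
      ∀ (c c' : Path q (⟨G.comp q.1 r.1, by
          rw [G.src_comp q.1 r.1 r.2.symm]; exact q.2⟩ : G.star x)),
        (∀ t, (c t).1 = G.comp q.1 (b t).1) →
        (∀ t, (c' t).1 = G.comp q.1 (b' t).1) →
        (a.trans c).Homotopic (a'.trans c')) := by
  -- the continuous map `G.star (G.tgt q.1) → G.star x`, `h ↦ q ∘ h`
  let φ : C(G.star (G.tgt q.1), G.star x) :=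
    ⟨fun h => G.homeoOfEq q.2 (G.starTrans q.1 h),
      (G.homeoOfEq q.2).continuous.comp (hL q.1).continuous⟩
  have hφ : ∀ h : G.star (G.tgt q.1), (φ h).1 = G.comp q.1 h.1 := fun h =>
    G.homeoOfEq_fst q.2 _
  have hsrc : q = φ i := by
    apply Subtype.ext
    rw [hφ, hi]
    exact (G.comp_id q.1).symm
  have htgt : (⟨G.comp q.1 r.1, by
      rw [G.src_comp q.1 r.1 r.2.symm]; exact q.2⟩ : G.star x) = φ r := by
    apply Subtype.ext
    rw [hφ]
  refine ⟨fun g h₀ => ⟨mulEquivOfHomeo ((hL g).homeomorph _) h₀⟩,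
    fun g => ⟨equivOfHomeo ((hL g).homeomorph (G.starTrans g))⟩,
    ⟨(b.map φ.continuous).cast hsrc htgt, fun t => by
      rw [Path.cast_coe]
      exact hφ (b t)⟩, ?_⟩
  intro a' b' ha hb c c' hc hc'
  have hcc : c = (b.map φ.continuous).cast hsrc htgt := by
    ext t
    rw [hc t, Path.cast_coe]
    exact (hφ (b t)).symm
  have hcc' : c' = (b'.map φ.continuous).cast hsrc htgt := by
    ext t
    rw [hc' t, Path.cast_coe]
    exact (hφ (b' t)).symm
  rw [hcc, hcc']
  exact ha.hcomp (homotopic_cast (hb.map φ) hsrc htgt)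
end

section
/- Let G be a star topological groupoid such that each star G_x has a universal cover, and let Mon(G) be the monodromy groupoid, the disjoint union over x ∈ Ob(G) of the stars π(G_x)_{ε(x)} of the fundamental groupoids of the stars, with composition [a]•[b] = [a ⋆ (a(1)∘b)]. Then the map p: Mon(G) → G sending [a] to the endpoint a(1) is a morphism of groupoids which is the identity on objects. -/
attribute [local instance] Path.Homotopic.setoid

/-- The identity `ε(x)`, viewed as a point of the star `G_x`. -/
def Grpd'.idm {O M : Type*} (G : Grpd' O M) (x : O) : G.star x :=
  ⟨G.e x, G.src_e x⟩

/-- The underlying set of the monodromy groupoid `Mon(G)` of a star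
topological groupoid `G`: the disjoint union over the objects `x` of the
stars `π(G_x)_{ε(x)}`, i.e. homotopy classes rel endpoints of paths in
`G_x` starting at `ε(x)`. -/
abbrev MonM {O M : Type*} (G : Grpd' O M)
    [∀ x : O, TopologicalSpace {m : M // G.src m = x}] :=
  Σ (x : O) (z : G.star x), Path.Homotopic.Quotient (G.idm x) z

/-- The projection `p : Mon(G) → G` sending the class `[a]` to the endpoint
`a(1)`. -/
def monProj {O M : Type*} (G : Grpd' O M)
    [∀ x : O, TopologicalSpace {m : M // G.src m = x}] (m : MonM G) : M :=
  m.2.1.1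

section MonAux
set_option linter.unusedSectionVars false

variable {O M : Type*} (G : Grpd' O M)
    [∀ x : O, TopologicalSpace {m : M // G.src m = x}]

/-- Left translation of a point of a star. -/
def Grpd'.tr (g : M) {x y : O} (hs : G.src g = x) (ht : G.tgt g = y)
    (p : G.star y) : G.star x :=
  ⟨G.comp g p.1, by rw [G.src_comp g p.1 (ht.trans p.2.symm), hs]⟩

variable (hL : ∀ (g : M) (x : O) (hg : G.src g = x),
      Continuous (fun h : G.star (G.tgt g) =>
        (⟨G.comp g h.1, by rw [G.src_comp g h.1 h.2.symm, hg]⟩ : G.star x)))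

include hL in
theorem Grpd'.trCont (g : M) {x y : O} (hs : G.src g = x) (ht : G.tgt g = y) :
    Continuous (G.tr g hs ht) := by
  subst ht
  exact hL g x hs

/-- Left translation of a path in a star. -/
def Grpd'.trPath (g : M) {x y : O} (hs : G.src g = x) (ht : G.tgt g = y)
    {p q : G.star y} (c : Path p q) :
    Path (G.tr g hs ht p) (G.tr g hs ht q) :=
  c.map (G.trCont hL g hs ht)

@[simp] theorem Grpd'.trPath_apply (g : M) {x y : O} (hs : G.src g = x)
    (ht : G.tgt g = y) {p q : G.star y} (c : Path p q) (t : unitInterval) :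
    G.trPath hL g hs ht c t = G.tr g hs ht (c t) := rfl

theorem Grpd'.trPath_homotopic (g : M) {x y : O} (hs : G.src g = x)
    (ht : G.tgt g = y) {p q : G.star y} {c c' : Path p q}
    (h : c.Homotopic c') :
    (G.trPath hL g hs ht c).Homotopic (G.trPath hL g hs ht c') :=
  h.map ⟨G.tr g hs ht, G.trCont hL g hs ht⟩

/-- Left translation of a homotopy class of paths in a star. -/
def Grpd'.trQ (g : M) {x y : O} (hs : G.src g = x) (ht : G.tgt g = y)
    {p q : G.star y} :
    Path.Homotopic.Quotient p q →
      Path.Homotopic.Quotient (G.tr g hs ht p) (G.tr g hs ht q) :=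
  Quotient.map (G.trPath hL g hs ht) fun _ _ h => G.trPath_homotopic hL g hs ht h

theorem Grpd'.trQ_mk (g : M) {x y : O} (hs : G.src g = x) (ht : G.tgt g = y)
    {p q : G.star y} (c : Path p q) :
    G.trQ hL g hs ht ⟦c⟧ = ⟦G.trPath hL g hs ht c⟧ := rfl

@[simp] theorem Path.cast_apply {X : Type*} [TopologicalSpace X] {x y x' y' : X}
    (γ : Path x y) (hx : x' = x) (hy : y' = y) (t : unitInterval) :
    γ.cast hx hy t = γ t := rfl

theorem Path.cast_rfl {X : Type*} [TopologicalSpace X] {x y : X}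
    (γ : Path x y) : γ.cast rfl rfl = γ := by ext t; rfl

theorem Path.Homotopic.cast' {X : Type*} [TopologicalSpace X] {x y x' y' : X}
    {p q : Path x y} (h : p.Homotopic q) (hx : x' = x) (hy : y' = y) :
    (p.cast hx hy).Homotopic (q.cast hx hy) := by
  subst hx; subst hy
  rw [Path.cast_rfl, Path.cast_rfl]; exact h

/-- Cast of a homotopy class along equalities of the endpoints. -/
def castQ {X : Type*} [TopologicalSpace X] {p p' q q' : X}
    (hp : p = p') (hq : q = q') (a : Path.Homotopic.Quotient p q) :
    Path.Homotopic.Quotient p' q' := by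
  subst hp; subst hq; exact a

theorem castQ_mk {X : Type*} [TopologicalSpace X] {p p' q q' : X}
    (hp : p = p') (hq : q = q') (P : Path p q) :
    castQ hp hq ⟦P⟧ = ⟦P.cast hp.symm hq.symm⟧ := by
  subst hp; subst hq
  rw [Path.cast_rfl]; rfl

theorem Grpd'.startEq {x y : O} (z : G.star x) (h : G.tgt z.1 = y) :
    G.tr z.1 z.2 h (G.idm y) = z :=
  Subtype.ext (show G.comp z.1 (G.e y) = z.1 by rw [← h]; exact G.comp_id z.1)

/-- The monodromy composition. -/
noncomputable def Grpd'.Mcomp (m n : MonM G) : MonM G :=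
  letI := Classical.propDecidable
  if h : G.tgt m.2.1.1 = n.1 then
    ⟨m.1, G.tr m.2.1.1 m.2.1.2 h n.2.1,
      Path.Homotopic.Quotient.trans m.2.2 (castQ (G.startEq m.2.1 h) rfl
        (G.trQ hL m.2.1.1 m.2.1.2 h n.2.2))⟩
  else m

theorem Grpd'.Mcomp_mk {x y : O} (z : G.star x) (r : G.star y)
    (a : Path (G.idm x) z) (b : Path (G.idm y) r) (h : G.tgt z.1 = y) :
    G.Mcomp hL ⟨x, z, ⟦a⟧⟩ ⟨y, r, ⟦b⟧⟩ =
      ⟨x, G.tr z.1 z.2 h r,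
        ⟦a.trans ((G.trPath hL z.1 z.2 h b).cast (G.startEq z h).symm rfl)⟧⟩ := by
  subst h
  simp only [Grpd'.Mcomp]
  rw [dif_pos trivial]
  show (⟨x, _, Path.Homotopic.Quotient.trans ⟦a⟧
    (castQ (G.startEq z rfl) rfl (G.trQ hL z.1 z.2 rfl ⟦b⟧))⟩ : MonM G) = _
  rw [G.trQ_mk, castQ_mk]
  rfl

theorem Path.Homotopic.symm2 {X : Type*} [TopologicalSpace X] {x y : X}
    {p q : Path x y} (h : p.Homotopic q) : p.symm.Homotopic q.symm :=
  Nonempty.map Path.Homotopy.symm₂ h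

/-- The monodromy inverse. -/
noncomputable def Grpd'.Minv (m : MonM G) : MonM G :=
  ⟨G.tgt m.2.1.1, (⟨G.inv m.2.1.1, G.src_inv m.2.1.1⟩ : G.star (G.tgt m.2.1.1)),
    castQ (Subtype.ext (G.inv_comp m.2.1.1))
      (Subtype.ext (show G.comp (G.inv m.2.1.1) (G.e m.1) = G.inv m.2.1.1 by
        have h := G.comp_id (G.inv m.2.1.1)
        rw [G.tgt_inv, m.2.1.2] at h
        exact h))
      (G.trQ hL (G.inv m.2.1.1) (G.src_inv m.2.1.1)
        ((G.tgt_inv m.2.1.1).trans m.2.1.2)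
        (Quotient.map Path.symm (fun _ _ h => Path.Homotopic.symm2 h) m.2.2))⟩

theorem Grpd'.Minv_mk {x : O} (z : G.star x) (a : Path (G.idm x) z) :
    G.Minv hL ⟨x, z, ⟦a⟧⟩ =
      ⟨G.tgt z.1, (⟨G.inv z.1, G.src_inv z.1⟩ : G.star (G.tgt z.1)),
        ⟦(G.trPath hL (G.inv z.1) (G.src_inv z.1) ((G.tgt_inv z.1).trans z.2)
            a.symm).cast (Subtype.ext (G.inv_comp z.1)).symm
          (Subtype.ext (show G.comp (G.inv z.1) (G.e x) = G.inv z.1 by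
            have h := G.comp_id (G.inv z.1)
            rw [G.tgt_inv, z.2] at h
            exact h)).symm⟧⟩ := by
  show (⟨G.tgt z.1, _, castQ _ _ (G.trQ hL _ _ _ ⟦a.symm⟧)⟩ : MonM G) = _
  rw [G.trQ_mk, castQ_mk]

theorem Grpd'.e_comp {x : O} (w : G.star x) : G.comp (G.e x) w.1 = w.1 := by
  have h := G.id_comp w.1
  rw [w.2] at h
  exact h

theorem Grpd'.cancel {x : O} (z w : G.star x) :
    G.comp z.1 (G.comp (G.inv z.1) w.1) = w.1 := by
  rw [← G.comp_assoc z.1 (G.inv z.1) w.1 (G.src_inv z.1).symm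
      ((G.tgt_inv z.1).trans (z.2.trans w.2.symm)), G.comp_inv z.1, z.2]
  exact G.e_comp w

theorem MonM.master {x : O} {p p' p'' : G.star x}
    {P : Path (G.idm x) p} {P' : Path (G.idm x) p'}
    {Q Q' : Path (G.idm x) p''}
    (h1 : ∀ t, (P t).1 = (Q t).1) (h2 : Q.Homotopic Q')
    (h3 : ∀ t, (Q' t).1 = (P' t).1) :
    (⟨x, p, ⟦P⟧⟩ : MonM G) = ⟨x, p', ⟦P'⟧⟩ := by
  have hp : p = p'' := Subtype.ext (by rw [← P.target, ← Q.target]; exact h1 1)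
  have hp' : p'' = p' := Subtype.ext (by rw [← Q'.target, ← P'.target]; exact h3 1)
  subst hp; subst hp'
  have e1 : P = Q := by ext t; exact congrArg Subtype.val (Subtype.ext (h1 t)) ▸ (h1 t)
  have e2 : Q' = P' := by ext t; exact h3 t
  exact congrArg (fun q => (⟨x, p, q⟩ : MonM G)) (e1 ▸ e2 ▸ Quotient.sound h2)

end MonAux

/-- Let `G` be a star topological groupoid (all left translations being
homeomorphisms).  Then `Mon(G)`, with composition
`[a] • [b] = [a ⋆ (a(1) ∘ b)]`, is a groupoid with the same objects as `G`,
and the endpoint map `p : Mon(G) → G`, `[a] ↦ a(1)`, is a morphism of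
groupoids which is the identity on objects. -/
theorem monodromy_groupoid_projection_is_morphism
    {O M : Type*} (G : Grpd' O M)
    [∀ x : O, TopologicalSpace {m : M // G.src m = x}]
    (hL : ∀ (g : M) (x : O) (hg : G.src g = x),
      Continuous (fun h : G.star (G.tgt g) =>
        (⟨G.comp g h.1, by rw [G.src_comp g h.1 h.2.symm, hg]⟩ : G.star x))) :
    ∃ MG : Grpd' O (MonM G),
      (∀ m : MonM G, MG.src m = m.1) ∧
      (∀ m : MonM G, MG.tgt m = G.tgt m.2.1.1) ∧
      (∀ x : O, MG.e x = ⟨x, G.idm x, ⟦Path.refl (G.idm x)⟧⟩) ∧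
      -- the composition is [a] • [b] = [a ⋆ (a(1) ∘ b)]
      (∀ (x : O) (q : G.star x) (a : Path (G.idm x) q)
        (r : G.star (G.tgt q.1)) (b : Path (G.idm (G.tgt q.1)) r)
        (c : Path q (⟨G.comp q.1 r.1, by
            rw [G.src_comp q.1 r.1 r.2.symm]; exact q.2⟩ : G.star x)),
        (∀ t, (c t).1 = G.comp q.1 (b t).1) →
        MG.comp ⟨x, q, ⟦a⟧⟩ ⟨G.tgt q.1, r, ⟦b⟧⟩ =
          ⟨x, ⟨G.comp q.1 r.1, by
            rw [G.src_comp q.1 r.1 r.2.symm]; exact q.2⟩, ⟦a.trans c⟧⟩) ∧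
      -- p is a morphism of groupoids which is the identity on objects
      (∀ m : MonM G, G.src (monProj G m) = MG.src m) ∧
      (∀ m : MonM G, G.tgt (monProj G m) = MG.tgt m) ∧
      (∀ m n : MonM G, MG.tgt m = MG.src n →
        monProj G (MG.comp m n) = G.comp (monProj G m) (monProj G n)) ∧
      (∀ x : O, monProj G (MG.e x) = G.e x) := by
  
  classical
  refine ⟨{ src := fun m => m.1
            tgt := fun m => G.tgt m.2.1.1
            e := fun x => ⟨x, G.idm x, ⟦Path.refl (G.idm x)⟧⟩
            comp := G.Mcomp hL
            inv := G.Minv hL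
            src_e := fun x => rfl
            tgt_e := fun x => G.tgt_e x
            src_comp := ?_
            tgt_comp := ?_
            comp_assoc := ?_
            id_comp := ?_
            comp_id := ?_
            src_inv := fun m => rfl
            tgt_inv := fun m => (G.tgt_inv _).trans m.2.1.2
            comp_inv := ?_
            inv_comp := ?_ },
        fun m => rfl, fun m => rfl, fun x => rfl, ?_, fun m => m.2.1.2,
        fun m => rfl, ?_, fun x => rfl⟩
  · -- src_comp
    intro m n h
    show (G.Mcomp hL m n).1 = m.1
    simp only [Grpd'.Mcomp]
    rw [dif_pos h]
  · -- tgt_comp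
    intro m n h
    show G.tgt (G.Mcomp hL m n).2.1.1 = G.tgt n.2.1.1
    simp only [Grpd'.Mcomp]
    show G.tgt (G.Mcomp hL m n).2.1.1 = _
    rw [show G.Mcomp hL m n = ⟨m.1, G.tr m.2.1.1 m.2.1.2 h n.2.1, _⟩ from dif_pos h]
    exact G.tgt_comp _ _ (h.trans n.2.1.2.symm)
  · -- comp_assoc
    rintro ⟨x, z, a⟩ ⟨y, r, b⟩ ⟨w, s, c⟩ hgh hhk
    replace hgh : G.tgt z.1 = y := hgh
    replace hhk : G.tgt r.1 = w := hhk
    subst hgh; subst hhk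
    refine Quotient.inductionOn₃ a b c fun a b c => ?_
    show G.Mcomp hL (G.Mcomp hL ⟨x, z, ⟦a⟧⟩ ⟨G.tgt z.1, r, ⟦b⟧⟩) ⟨G.tgt r.1, s, ⟦c⟧⟩ =
      G.Mcomp hL ⟨x, z, ⟦a⟧⟩ (G.Mcomp hL ⟨G.tgt z.1, r, ⟦b⟧⟩ ⟨G.tgt r.1, s, ⟦c⟧⟩)
    rw [G.Mcomp_mk hL z r a b rfl, G.Mcomp_mk hL r s b c rfl,
      G.Mcomp_mk hL (G.tr z.1 z.2 rfl r) s _ c (G.tgt_comp z.1 r.1 r.2.symm),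
      G.Mcomp_mk hL z (G.tr r.1 r.2 rfl s) a _ rfl]
    refine MonM.master G (fun t => rfl) ⟨Path.Homotopy.transAssoc _ _ _⟩ fun t => ?_
    simp only [Path.trans_apply, Path.cast_apply, Grpd'.trPath_apply]
    split_ifs <;> try rfl
    exact G.comp_assoc z.1 r.1 _ r.2.symm (c _).2.symm
  · -- id_comp
    rintro ⟨x, z, a⟩
    refine Quotient.inductionOn a fun a => ?_
    show G.Mcomp hL ⟨x, G.idm x, ⟦Path.refl (G.idm x)⟧⟩ ⟨x, z, ⟦a⟧⟩ = ⟨x, z, ⟦a⟧⟩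
    rw [G.Mcomp_mk hL (G.idm x) z (Path.refl _) a (G.tgt_e x)]
    refine MonM.master G (Q := (Path.refl (G.idm x)).trans a) (fun t => ?_)
      ⟨Path.Homotopy.reflTrans a⟩ fun t => rfl
    simp only [Path.trans_apply, Path.cast_apply, Grpd'.trPath_apply]
    split_ifs
    · rfl
    · exact G.e_comp _
  · -- comp_id
    rintro ⟨x, z, a⟩
    refine Quotient.inductionOn a fun a => ?_
    show G.Mcomp hL ⟨x, z, ⟦a⟧⟩ ⟨G.tgt z.1, G.idm (G.tgt z.1), ⟦Path.refl _⟧⟩ = ⟨x, z, ⟦a⟧⟩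
    rw [G.Mcomp_mk hL z (G.idm (G.tgt z.1)) a (Path.refl _) rfl]
    refine MonM.master G (Q := a.trans (Path.refl z)) (fun t => ?_)
      ⟨Path.Homotopy.transRefl a⟩ fun t => rfl
    simp only [Path.trans_apply, Path.cast_apply, Grpd'.trPath_apply]
    split_ifs
    · rfl
    · exact G.comp_id z.1
  · -- comp_inv
    rintro ⟨x, z, a⟩
    refine Quotient.inductionOn a fun a => ?_
    show G.Mcomp hL ⟨x, z, ⟦a⟧⟩ (G.Minv hL ⟨x, z, ⟦a⟧⟩) = ⟨x, G.idm x, ⟦Path.refl _⟧⟩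
    rw [G.Minv_mk hL z a, G.Mcomp_mk hL z _ a _ rfl]
    refine MonM.master G (Q := a.trans a.symm) (fun t => ?_)
      ⟨(Path.Homotopy.reflTransSymm a).symm⟩ fun t => rfl
    simp only [Path.trans_apply, Path.cast_apply, Grpd'.trPath_apply]
    split_ifs
    · rfl
    · exact G.cancel z _
  · -- inv_comp
    rintro ⟨x, z, a⟩
    refine Quotient.inductionOn a fun a => ?_
    show G.Mcomp hL (G.Minv hL ⟨x, z, ⟦a⟧⟩) ⟨x, z, ⟦a⟧⟩ =
      ⟨G.tgt z.1, G.idm (G.tgt z.1), ⟦Path.refl _⟧⟩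
    rw [G.Minv_mk hL z a,
      G.Mcomp_mk hL (⟨G.inv z.1, G.src_inv z.1⟩ : G.star (G.tgt z.1)) z _ a
        ((G.tgt_inv z.1).trans z.2)]
    have hcast : G.idm (G.tgt z.1) =
        G.tr (G.inv z.1) (G.src_inv z.1) ((G.tgt_inv z.1).trans z.2) z :=
      (Subtype.ext (G.inv_comp z.1)).symm
    refine MonM.master G
      (Q := (G.trPath hL (G.inv z.1) (G.src_inv z.1) ((G.tgt_inv z.1).trans z.2)
          (a.symm.trans a)).cast hcast hcast)
      (fun t => ?_) ?_ fun t => rfl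
    · simp only [Path.trans_apply, Path.cast_apply, Grpd'.trPath_apply]
      split_ifs <;> rfl
    · have hh : (a.symm.trans a).Homotopic (Path.refl z) :=
        ⟨(Path.Homotopy.reflSymmTrans a).symm⟩
      have h4 := Path.Homotopic.cast'
        (G.trPath_homotopic hL (G.inv z.1) (G.src_inv z.1)
          ((G.tgt_inv z.1).trans z.2) hh)
        hcast hcast
      have h5 : (G.trPath hL (G.inv z.1) (G.src_inv z.1)
          ((G.tgt_inv z.1).trans z.2) (Path.refl z)).cast hcast hcast =
          Path.refl (G.idm (G.tgt z.1)) := by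
        apply Path.ext
        funext t
        exact Subtype.ext (G.inv_comp z.1)
      rw [h5] at h4
      exact h4
  · -- composition spec
    intro x q a r b c hc
    show G.Mcomp hL ⟨x, q, ⟦a⟧⟩ ⟨G.tgt q.1, r, ⟦b⟧⟩ = _
    rw [G.Mcomp_mk hL q r a b rfl]
    refine MonM.master G (Q := a.trans c) (fun t => ?_) (Path.Homotopic.refl _)
      fun t => rfl
    simp only [Path.trans_apply, Path.cast_apply, Grpd'.trPath_apply]
    split_ifs
    · rfl
    · exact (hc _).symm
  · -- p preserves composition
    intro m n h
    show monProj G (G.Mcomp hL m n) = G.comp (monProj G m) (monProj G n)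
    simp only [Grpd'.Mcomp, monProj]
    show (G.Mcomp hL m n).2.1.1 = _
    rw [show G.Mcomp hL m n = ⟨m.1, G.tr m.2.1.1 m.2.1.2 h n.2.1, _⟩ from dif_pos h]
    rfl
end
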